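/- For every H ∈ (1/2, 1), the determinant D_{2,2}^*(H) := ρ_2(1 + ρ_2) − ρ_1(ρ_1 + ρ_3) is strictly positive, where ρ_k = ρ_k(H). -/

import Mathlib

open Real Set Finset

open Topology Filter

/-- Autocovariance function of fractional Gaussian noise with Hurst parameter `H`:
`ρ_k(H) = ((k+1)^{2H} − 2·k^{2H} + (k−1)^{2H})/2` for `k ≥ 1`, and `ρ_0(H) = 1`. -/
noncomputable def rho (H : ℝ) (k : ℕ) : ℝ :=
  if k = 0 then 1
  else (((k : ℝ) + 1) ^ (2 * H) - 2 * (k : ℝ) ^ (2 * H) + ((k : ℝ) - 1) ^ (2 * H)) / 2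

namespace Stmt9Aux

noncomputable def G (s : ℝ) : ℝ :=
  (9:ℝ) ^ s - (8:ℝ) ^ s - 2 * (6:ℝ) ^ s + 4 * (4:ℝ) ^ s - 2 * (2:ℝ) ^ s - 1

noncomputable def H0 (s : ℝ) : ℝ :=
  (3:ℝ) ^ s - (8/3:ℝ) ^ s - 2 * (2:ℝ) ^ s + 4 * (4/3:ℝ) ^ s - 2 * (2/3:ℝ) ^ s - (1/3:ℝ) ^ s

noncomputable def F1 (s : ℝ) : ℝ :=
  log 3 * (3:ℝ) ^ s - log (8/3) * (8/3:ℝ) ^ s - 2 * log 2 * (2:ℝ) ^ s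
    + 4 * log (4/3) * (4/3:ℝ) ^ s - 2 * log (2/3) * (2/3:ℝ) ^ s - log (1/3) * (1/3:ℝ) ^ s

noncomputable def H1 (s : ℝ) : ℝ :=
  log 3 * (9/5:ℝ) ^ s - log (8/3) * (8/5:ℝ) ^ s - 2 * log 2 * (6/5:ℝ) ^ s
    + 4 * log (4/3) * (4/5:ℝ) ^ s - 2 * log (2/3) * (2/5:ℝ) ^ s - log (1/3) * (1/5:ℝ) ^ s

noncomputable def F2 (s : ℝ) : ℝ :=
  log 3 * log (9/5) * (9/5:ℝ) ^ s - log (8/3) * log (8/5) * (8/5:ℝ) ^ s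
    - 2 * log 2 * log (6/5) * (6/5:ℝ) ^ s + 4 * log (4/3) * log (4/5) * (4/5:ℝ) ^ s
    - 2 * log (2/3) * log (2/5) * (2/5:ℝ) ^ s - log (1/3) * log (1/5) * (1/5:ℝ) ^ s

noncomputable def H2 (s : ℝ) : ℝ :=
  log 3 * log (9/5) * (18/17:ℝ) ^ s - log (8/3) * log (8/5) * (16/17:ℝ) ^ s
    - 2 * log 2 * log (6/5) * (12/17:ℝ) ^ s + 4 * log (4/3) * log (4/5) * (8/17:ℝ) ^ s
    - 2 * log (2/3) * log (2/5) * (4/17:ℝ) ^ s - log (1/3) * log (1/5) * (2/17:ℝ) ^ s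

noncomputable def F3 (s : ℝ) : ℝ :=
  log 3 * log (9/5) * log (18/17) * (18/17:ℝ) ^ s
    - log (8/3) * log (8/5) * log (16/17) * (16/17:ℝ) ^ s
    - 2 * log 2 * log (6/5) * log (12/17) * (12/17:ℝ) ^ s
    + 4 * log (4/3) * log (4/5) * log (8/17) * (8/17:ℝ) ^ s
    - 2 * log (2/3) * log (2/5) * log (4/17) * (4/17:ℝ) ^ s
    - log (1/3) * log (1/5) * log (2/17) * (2/17:ℝ) ^ s

lemma mulr (s a b : ℝ) (ha : 0 ≤ a) (hb : 0 ≤ b) : a ^ s * b ^ s = (a * b) ^ s :=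
  (Real.mul_rpow ha hb).symm

lemma d1 (x : ℝ) : HasDerivAt H0 (F1 x) x := by
  have h3 := (Real.hasStrictDerivAt_const_rpow (show (0:ℝ) < 3 by norm_num) x).hasDerivAt
  have h83 := (Real.hasStrictDerivAt_const_rpow (show (0:ℝ) < 8/3 by norm_num) x).hasDerivAt
  have h2 := (Real.hasStrictDerivAt_const_rpow (show (0:ℝ) < 2 by norm_num) x).hasDerivAt
  have h43 := (Real.hasStrictDerivAt_const_rpow (show (0:ℝ) < 4/3 by norm_num) x).hasDerivAt
  have h23 := (Real.hasStrictDerivAt_const_rpow (show (0:ℝ) < 2/3 by norm_num) x).hasDerivAt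
  have h13 := (Real.hasStrictDerivAt_const_rpow (show (0:ℝ) < 1/3 by norm_num) x).hasDerivAt
  have h := ((((h3.sub h83).sub (h2.const_mul 2)).add (h43.const_mul 4)).sub
      (h23.const_mul 2)).sub h13
  refine HasDerivAt.congr_deriv h ?_
  simp only [F1]; ring

lemma d2 (x : ℝ) : HasDerivAt H1 (F2 x) x := by
  have h1 := ((Real.hasStrictDerivAt_const_rpow (show (0:ℝ) < 9/5 by norm_num) x).hasDerivAt).const_mul (log 3)
  have h2 := ((Real.hasStrictDerivAt_const_rpow (show (0:ℝ) < 8/5 by norm_num) x).hasDerivAt).const_mul (log (8/3))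
  have h3 := ((Real.hasStrictDerivAt_const_rpow (show (0:ℝ) < 6/5 by norm_num) x).hasDerivAt).const_mul (2 * log 2)
  have h4 := ((Real.hasStrictDerivAt_const_rpow (show (0:ℝ) < 4/5 by norm_num) x).hasDerivAt).const_mul (4 * log (4/3))
  have h5 := ((Real.hasStrictDerivAt_const_rpow (show (0:ℝ) < 2/5 by norm_num) x).hasDerivAt).const_mul (2 * log (2/3))
  have h6 := ((Real.hasStrictDerivAt_const_rpow (show (0:ℝ) < 1/5 by norm_num) x).hasDerivAt).const_mul (log (1/3))
  have h := ((((h1.sub h2).sub h3).add h4).sub h5).sub h6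
  refine HasDerivAt.congr_deriv h ?_
  simp only [F2]; ring

lemma d3 (x : ℝ) : HasDerivAt H2 (F3 x) x := by
  have h1 := ((Real.hasStrictDerivAt_const_rpow (show (0:ℝ) < 18/17 by norm_num) x).hasDerivAt).const_mul (log 3 * log (9/5))
  have h2 := ((Real.hasStrictDerivAt_const_rpow (show (0:ℝ) < 16/17 by norm_num) x).hasDerivAt).const_mul (log (8/3) * log (8/5))
  have h3 := ((Real.hasStrictDerivAt_const_rpow (show (0:ℝ) < 12/17 by norm_num) x).hasDerivAt).const_mul (2 * log 2 * log (6/5))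
  have h4 := ((Real.hasStrictDerivAt_const_rpow (show (0:ℝ) < 8/17 by norm_num) x).hasDerivAt).const_mul (4 * log (4/3) * log (4/5))
  have h5 := ((Real.hasStrictDerivAt_const_rpow (show (0:ℝ) < 4/17 by norm_num) x).hasDerivAt).const_mul (2 * log (2/3) * log (2/5))
  have h6 := ((Real.hasStrictDerivAt_const_rpow (show (0:ℝ) < 2/17 by norm_num) x).hasDerivAt).const_mul (log (1/3) * log (1/5))
  have h := ((((h1.sub h2).sub h3).add h4).sub h5).sub h6
  refine HasDerivAt.congr_deriv h ?_
  simp only [F3]; ring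

lemma H0_eq (s : ℝ) : H0 s = G s * (1/3:ℝ) ^ s := by
  have e : G s * (1/3:ℝ) ^ s =
      (9:ℝ) ^ s * (1/3:ℝ) ^ s - (8:ℝ) ^ s * (1/3:ℝ) ^ s - 2 * ((6:ℝ) ^ s * (1/3:ℝ) ^ s)
        + 4 * ((4:ℝ) ^ s * (1/3:ℝ) ^ s) - 2 * ((2:ℝ) ^ s * (1/3:ℝ) ^ s)
        - (1:ℝ) ^ s * (1/3:ℝ) ^ s := by
    simp only [G, Real.one_rpow]; ring
  rw [e, mulr s 9 (1/3) (by norm_num) (by norm_num), mulr s 8 (1/3) (by norm_num) (by norm_num),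
    mulr s 6 (1/3) (by norm_num) (by norm_num), mulr s 4 (1/3) (by norm_num) (by norm_num),
    mulr s 2 (1/3) (by norm_num) (by norm_num), mulr s 1 (1/3) (by norm_num) (by norm_num)]
  simp only [H0]
  norm_num

lemma H1_eq (s : ℝ) : H1 s = F1 s * (3/5:ℝ) ^ s := by
  have e : F1 s * (3/5:ℝ) ^ s =
      log 3 * ((3:ℝ) ^ s * (3/5:ℝ) ^ s) - log (8/3) * ((8/3:ℝ) ^ s * (3/5:ℝ) ^ s)
        - 2 * log 2 * ((2:ℝ) ^ s * (3/5:ℝ) ^ s) + 4 * log (4/3) * ((4/3:ℝ) ^ s * (3/5:ℝ) ^ s)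
        - 2 * log (2/3) * ((2/3:ℝ) ^ s * (3/5:ℝ) ^ s)
        - log (1/3) * ((1/3:ℝ) ^ s * (3/5:ℝ) ^ s) := by
    simp only [F1]; ring
  rw [e, mulr s 3 (3/5) (by norm_num) (by norm_num), mulr s (8/3) (3/5) (by norm_num) (by norm_num),
    mulr s 2 (3/5) (by norm_num) (by norm_num), mulr s (4/3) (3/5) (by norm_num) (by norm_num),
    mulr s (2/3) (3/5) (by norm_num) (by norm_num), mulr s (1/3) (3/5) (by norm_num) (by norm_num)]
  simp only [H1]
  norm_num

lemma H2_eq (s : ℝ) : H2 s = F2 s * (10/17:ℝ) ^ s := by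
  have e : F2 s * (10/17:ℝ) ^ s =
      log 3 * log (9/5) * ((9/5:ℝ) ^ s * (10/17:ℝ) ^ s)
        - log (8/3) * log (8/5) * ((8/5:ℝ) ^ s * (10/17:ℝ) ^ s)
        - 2 * log 2 * log (6/5) * ((6/5:ℝ) ^ s * (10/17:ℝ) ^ s)
        + 4 * log (4/3) * log (4/5) * ((4/5:ℝ) ^ s * (10/17:ℝ) ^ s)
        - 2 * log (2/3) * log (2/5) * ((2/5:ℝ) ^ s * (10/17:ℝ) ^ s)
        - log (1/3) * log (1/5) * ((1/5:ℝ) ^ s * (10/17:ℝ) ^ s) := by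
    simp only [F2]; ring
  rw [e, mulr s (9/5) (10/17) (by norm_num) (by norm_num),
    mulr s (8/5) (10/17) (by norm_num) (by norm_num),
    mulr s (6/5) (10/17) (by norm_num) (by norm_num),
    mulr s (4/5) (10/17) (by norm_num) (by norm_num),
    mulr s (2/5) (10/17) (by norm_num) (by norm_num),
    mulr s (1/5) (10/17) (by norm_num) (by norm_num)]
  simp only [H2]
  norm_num

lemma F3_pos (s : ℝ) : 0 < F3 s := by
  have l1 : 0 < log 3 := Real.log_pos (by norm_num)
  have l2 : 0 < log (9/5) := Real.log_pos (by norm_num)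
  have l3 : 0 < log (18/17) := Real.log_pos (by norm_num)
  have l4 : 0 < log (8/3) := Real.log_pos (by norm_num)
  have l5 : 0 < log (8/5) := Real.log_pos (by norm_num)
  have l6 : log (16/17) < 0 := Real.log_neg (by norm_num) (by norm_num)
  have l7 : 0 < log 2 := Real.log_pos (by norm_num)
  have l8 : 0 < log (6/5) := Real.log_pos (by norm_num)
  have l9 : log (12/17) < 0 := Real.log_neg (by norm_num) (by norm_num)
  have l10 : 0 < log (4/3) := Real.log_pos (by norm_num)
  have l11 : log (4/5) < 0 := Real.log_neg (by norm_num) (by norm_num)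
  have l12 : log (8/17) < 0 := Real.log_neg (by norm_num) (by norm_num)
  have l13 : log (2/3) < 0 := Real.log_neg (by norm_num) (by norm_num)
  have l14 : log (2/5) < 0 := Real.log_neg (by norm_num) (by norm_num)
  have l15 : log (4/17) < 0 := Real.log_neg (by norm_num) (by norm_num)
  have l16 : log (1/3) < 0 := Real.log_neg (by norm_num) (by norm_num)
  have l17 : log (1/5) < 0 := Real.log_neg (by norm_num) (by norm_num)
  have l18 : log (2/17) < 0 := Real.log_neg (by norm_num) (by norm_num)
  have r1 : 0 < (18/17:ℝ) ^ s := Real.rpow_pos_of_pos (by norm_num) s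
  have r2 : 0 < (16/17:ℝ) ^ s := Real.rpow_pos_of_pos (by norm_num) s
  have r3 : 0 < (12/17:ℝ) ^ s := Real.rpow_pos_of_pos (by norm_num) s
  have r4 : 0 < (8/17:ℝ) ^ s := Real.rpow_pos_of_pos (by norm_num) s
  have r5 : 0 < (4/17:ℝ) ^ s := Real.rpow_pos_of_pos (by norm_num) s
  have r6 : 0 < (2/17:ℝ) ^ s := Real.rpow_pos_of_pos (by norm_num) s
  have t1 : 0 < log 3 * log (9/5) * log (18/17) * (18/17:ℝ) ^ s :=
    mul_pos (mul_pos (mul_pos l1 l2) l3) r1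
  have t2 : 0 < -(log (8/3) * log (8/5) * log (16/17) * (16/17:ℝ) ^ s) := by
    have : log (8/3) * log (8/5) * log (16/17) < 0 :=
      mul_neg_of_pos_of_neg (mul_pos l4 l5) l6
    have := mul_neg_of_neg_of_pos this r2
    linarith
  have t3 : 0 < -(2 * log 2 * log (6/5) * log (12/17) * (12/17:ℝ) ^ s) := by
    have : 2 * log 2 * log (6/5) * log (12/17) < 0 :=
      mul_neg_of_pos_of_neg (mul_pos (by linarith) l8) l9
    have := mul_neg_of_neg_of_pos this r3
    linarith
  have t4 : 0 < 4 * log (4/3) * log (4/5) * log (8/17) * (8/17:ℝ) ^ s := by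
    have h45 : 0 < log (4/5) * log (8/17) := mul_pos_of_neg_of_neg l11 l12
    have : 0 < 4 * log (4/3) * (log (4/5) * log (8/17)) :=
      mul_pos (by linarith) h45
    have := mul_pos this r4
    calc (0:ℝ) < 4 * log (4/3) * (log (4/5) * log (8/17)) * (8/17:ℝ) ^ s := this
      _ = 4 * log (4/3) * log (4/5) * log (8/17) * (8/17:ℝ) ^ s := by ring
  have t5 : 0 < -(2 * log (2/3) * log (2/5) * log (4/17) * (4/17:ℝ) ^ s) := by
    have h1 : 0 < log (2/3) * log (2/5) := mul_pos_of_neg_of_neg l13 l14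
    have h2 : 2 * log (2/3) * log (2/5) * log (4/17) < 0 := by nlinarith
    have := mul_neg_of_neg_of_pos h2 r5
    linarith
  have t6 : 0 < -(log (1/3) * log (1/5) * log (2/17) * (2/17:ℝ) ^ s) := by
    have h1 : 0 < log (1/3) * log (1/5) := mul_pos_of_neg_of_neg l16 l17
    have h2 : log (1/3) * log (1/5) * log (2/17) < 0 := mul_neg_of_pos_of_neg h1 l18
    have := mul_neg_of_neg_of_pos h2 r6
    linarith
  simp only [F3]
  linarith

lemma contH0 : Continuous H0 := by
  rw [continuous_iff_continuousAt]; exact fun x => (d1 x).continuousAt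

lemma contH1 : Continuous H1 := by
  rw [continuous_iff_continuousAt]; exact fun x => (d2 x).continuousAt

lemma contH2 : Continuous H2 := by
  rw [continuous_iff_continuousAt]; exact fun x => (d3 x).continuousAt

lemma G1 : G 1 = 0 := by
  simp only [G, Real.rpow_one]; norm_num

lemma G2 : G 2 = 0 := by
  simp only [G, Real.rpow_two]; norm_num

lemma sqrt_le {n r : ℝ} (hn : 0 ≤ n) (hr : 0 < r) (h : n ≤ r ^ 2) : Real.sqrt n ≤ r := by
  nlinarith [Real.sq_sqrt hn, Real.sqrt_nonneg n]

lemma G32 : 0 < G (3/2) := by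
  have key : ∀ x : ℝ, 0 ≤ x → x ^ ((3:ℝ)/2) = Real.sqrt x ^ (3:ℕ) := by
    intro x hx
    rw [Real.sqrt_eq_rpow, ← Real.rpow_natCast (x ^ ((1:ℝ)/2)) 3, ← Real.rpow_mul hx]
    norm_num
  have s9 : Real.sqrt 9 = 3 := by
    rw [show (9:ℝ) = 3 ^ 2 by norm_num, Real.sqrt_sq (by norm_num : (0:ℝ) ≤ 3)]
  have s4 : Real.sqrt 4 = 2 := by
    rw [show (4:ℝ) = 2 ^ 2 by norm_num, Real.sqrt_sq (by norm_num : (0:ℝ) ≤ 2)]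
  have c8 : Real.sqrt 8 ^ (3:ℕ) = 8 * Real.sqrt 8 := by
    rw [pow_succ, Real.sq_sqrt (by norm_num : (0:ℝ) ≤ 8)]
  have c6 : Real.sqrt 6 ^ (3:ℕ) = 6 * Real.sqrt 6 := by
    rw [pow_succ, Real.sq_sqrt (by norm_num : (0:ℝ) ≤ 6)]
  have c2 : Real.sqrt 2 ^ (3:ℕ) = 2 * Real.sqrt 2 := by
    rw [pow_succ, Real.sq_sqrt (by norm_num : (0:ℝ) ≤ 2)]
  have b8 : Real.sqrt 8 ≤ 2.8285 := sqrt_le (by norm_num) (by norm_num) (by norm_num)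
  have b6 : Real.sqrt 6 ≤ 2.4495 := sqrt_le (by norm_num) (by norm_num) (by norm_num)
  have b2 : Real.sqrt 2 ≤ 1.4143 := sqrt_le (by norm_num) (by norm_num) (by norm_num)
  simp only [G]
  rw [key 9 (by norm_num), key 8 (by norm_num), key 6 (by norm_num), key 4 (by norm_num),
    key 2 (by norm_num), s9, s4, c8, c6, c2]
  norm_num
  nlinarith [b8, b6, b2]

lemma log_facts : Real.log (8/3) = 3 * Real.log 2 - Real.log 3 ∧
    Real.log (4/3) = 2 * Real.log 2 - Real.log 3 ∧
    Real.log (2/3) = Real.log 2 - Real.log 3 ∧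
    Real.log (1/3) = -Real.log 3 := by
  refine ⟨?_, ?_, ?_, ?_⟩
  · rw [show (8:ℝ)/3 = 2^(3:ℕ)/3 by norm_num, Real.log_div (by norm_num) (by norm_num),
      Real.log_pow]
    push_cast; ring
  · rw [show (4:ℝ)/3 = 2^(2:ℕ)/3 by norm_num, Real.log_div (by norm_num) (by norm_num),
      Real.log_pow]
    push_cast; ring
  · rw [Real.log_div (by norm_num) (by norm_num)]
  · rw [Real.log_div (by norm_num) (by norm_num), Real.log_one]; ring

lemma F1_at_1 : 0 < F1 1 := by
  obtain ⟨e1, e2, e3, e4⟩ := log_facts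
  have h : 8 * Real.log 2 < 6 * Real.log 3 := by
    have := Real.log_lt_log (show (0:ℝ) < 2 ^ (8:ℕ) by positivity)
      (show (2:ℝ)^(8:ℕ) < 3^(6:ℕ) by norm_num)
    rw [Real.log_pow, Real.log_pow] at this
    push_cast at this; linarith
  simp only [F1, Real.rpow_one]
  rw [e1, e2, e3, e4]
  nlinarith

lemma F1_at_2 : F1 2 < 0 := by
  obtain ⟨e1, e2, e3, e4⟩ := log_facts
  have h : 10 * Real.log 3 < 16 * Real.log 2 := by
    have := Real.log_lt_log (show (0:ℝ) < 3 ^ (10:ℕ) by positivity)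
      (show (3:ℝ)^(10:ℕ) < 2^(16:ℕ) by norm_num)
    rw [Real.log_pow, Real.log_pow] at this
    push_cast at this; linarith
  simp only [F1, Real.rpow_two]
  rw [e1, e2, e3, e4]
  nlinarith

/-- interior max with strictly positive value -/
lemma interior_max {a b t : ℝ} (hab : a < b) (hta : a < t) (htb : t < b)
    (hfa : H0 a ≤ 0) (hfb : H0 b ≤ 0) (hft : 0 < H0 t) :
    ∃ c, a < c ∧ c < b ∧ F1 c = 0 ∧ 0 < H0 c := by
  obtain ⟨m, hm, hmax⟩ := isCompact_Icc.exists_isMaxOn (nonempty_Icc.mpr hab.le)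
    contH0.continuousOn
  have hmax' := isMaxOn_iff.mp hmax
  have hfm : 0 < H0 m := lt_of_lt_of_le hft (hmax' t ⟨hta.le, htb.le⟩)
  have hma : a < m := lt_of_le_of_ne hm.1 (by rintro rfl; linarith)
  have hmb : m < b := lt_of_le_of_ne hm.2 (by rintro rfl; linarith)
  have hloc : IsLocalMax H0 m := hmax.isLocalMax (Icc_mem_nhds hma hmb)
  have := hloc.deriv_eq_zero
  rw [(d1 m).deriv] at this
  exact ⟨m, hma, hmb, this, hfm⟩

/-- interior min with nonpositive value (degenerate-friendly) -/
lemma interior_min {a b t : ℝ} (hab : a < b) (hta : a < t) (htb : t < b)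
    (hfa : 0 ≤ H0 a) (hfb : 0 ≤ H0 b) (hft : H0 t ≤ 0) :
    ∃ c, a < c ∧ c < b ∧ F1 c = 0 ∧ H0 c ≤ 0 := by
  obtain ⟨m, hm, hmin⟩ := isCompact_Icc.exists_isMinOn (nonempty_Icc.mpr hab.le)
    contH0.continuousOn
  have hmin' := isMinOn_iff.mp hmin
  have hmt : H0 m ≤ H0 t := hmin' t ⟨hta.le, htb.le⟩
  rcases lt_or_eq_of_le (le_trans hmt hft) with hneg | heq
  · have hma : a < m := lt_of_le_of_ne hm.1 (by rintro rfl; linarith)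
    have hmb : m < b := lt_of_le_of_ne hm.2 (by rintro rfl; linarith)
    have hloc : IsLocalMin H0 m := hmin.isLocalMin (Icc_mem_nhds hma hmb)
    have := hloc.deriv_eq_zero
    rw [(d1 m).deriv] at this
    exact ⟨m, hma, hmb, this, hneg.le⟩
  · -- min value is 0, so t itself is a min point
    have h2 : H0 t = 0 := by rw [heq] at hmt; exact le_antisymm hft hmt
    have htmin : IsMinOn H0 (Icc a b) t := by
      apply isMinOn_iff.mpr
      intro x hx
      rw [h2, ← heq]
      exact hmin' x hx
    have hloc : IsLocalMin H0 t := htmin.isLocalMin (Icc_mem_nhds hta htb)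
    have := hloc.deriv_eq_zero
    rw [(d1 t).deriv] at this
    exact ⟨t, hta, htb, this, hft⟩

/-- from positive derivative at a zero, find a point to the right with positive value -/
lemma pos_right {a b : ℝ} (hd : 0 < F1 a) (hfa : H0 a = 0) (hab : a < b) :
    ∃ w, a < w ∧ w < b ∧ 0 < H0 w := by
  have h1 := hasDerivAt_iff_tendsto_slope.mp (d1 a)
  have h2 : {x | 0 < slope H0 a x} ∈ 𝓝[≠] a := h1 (Ioi_mem_nhds hd)
  have h3 : {x | 0 < slope H0 a x} ∈ 𝓝[>] a :=
    nhdsWithin_mono a (fun x (hx : x ∈ Ioi a) => ne_of_gt hx) h2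
  have h4 : Ioo a b ∈ 𝓝[>] a := Ioo_mem_nhdsGT hab
  obtain ⟨w, hw1, hw2⟩ := Filter.nonempty_of_mem (Filter.inter_mem h3 h4)
  have hs : 0 < slope H0 a w := hw1
  rw [slope_def_field, hfa, sub_zero] at hs
  have hwa : 0 < w - a := sub_pos.mpr hw2.1
  refine ⟨w, hw2.1, hw2.2, ?_⟩
  rcases div_pos_iff.mp hs with ⟨h, _⟩ | ⟨_, h⟩
  · exact h
  · linarith

/-- from negative derivative at a zero, find a point to the left with positive value -/
lemma pos_left {a b : ℝ} (hd : F1 b < 0) (hfb : H0 b = 0) (hab : a < b) :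
    ∃ w, a < w ∧ w < b ∧ 0 < H0 w := by
  have h1 := hasDerivAt_iff_tendsto_slope.mp (d1 b)
  have h2 : {x | slope H0 b x < 0} ∈ 𝓝[≠] b := h1 (Iio_mem_nhds hd)
  have h3 : {x | slope H0 b x < 0} ∈ 𝓝[<] b :=
    nhdsWithin_mono b (fun x (hx : x ∈ Iio b) => ne_of_lt hx) h2
  have h4 : Ioo a b ∈ 𝓝[<] b := Ioo_mem_nhdsLT hab
  obtain ⟨w, hw1, hw2⟩ := Filter.nonempty_of_mem (Filter.inter_mem h3 h4)
  have hs : slope H0 b w < 0 := hw1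
  rw [slope_def_field, hfb, sub_zero] at hs
  have hwb : w - b < 0 := sub_neg.mpr hw2.2
  refine ⟨w, hw2.1, hw2.2, ?_⟩
  rcases div_neg_iff.mp hs with ⟨h, _⟩ | ⟨_, h⟩
  · exact h
  · linarith

lemma sort3 {P : ℝ → Prop} {x y z : ℝ} (hxy : x ≠ y) (hxz : x ≠ z) (hyz : y ≠ z)
    (hx : P x) (hy : P y) (hz : P z) :
    ∃ a b c : ℝ, a < b ∧ b < c ∧ P a ∧ P b ∧ P c := by
  rcases lt_trichotomy x y with h1 | h1 | h1
  · rcases lt_trichotomy y z with h2 | h2 | h2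
    · exact ⟨x, y, z, h1, h2, hx, hy, hz⟩
    · exact absurd h2 hyz
    · rcases lt_trichotomy x z with h3 | h3 | h3
      · exact ⟨x, z, y, h3, h2, hx, hz, hy⟩
      · exact absurd h3 hxz
      · exact ⟨z, x, y, h3, h1, hz, hx, hy⟩
  · exact absurd h1 hxy
  · rcases lt_trichotomy x z with h2 | h2 | h2
    · exact ⟨y, x, z, h1, h2, hy, hx, hz⟩
    · exact absurd h2 hxz
    · rcases lt_trichotomy y z with h3 | h3 | h3
      · exact ⟨y, z, x, h3, h2, hy, hz, hx⟩
      · exact absurd h3 hyz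
      · exact ⟨z, y, x, h3, h1, hz, hy, hx⟩

lemma G_pos {s : ℝ} (hs1 : 1 < s) (hs2 : s < 2) : 0 < G s := by
  by_contra hc
  push_neg at hc
  -- transfer everything to H0
  have hr : ∀ u : ℝ, 0 < (1/3:ℝ) ^ u := fun u => Real.rpow_pos_of_pos (by norm_num) u
  have hH0s : H0 s ≤ 0 := by
    rw [H0_eq]; exact mul_nonpos_of_nonpos_of_nonneg hc (hr s).le
  have hH01 : H0 1 = 0 := by rw [H0_eq, G1, zero_mul]
  have hH02 : H0 2 = 0 := by rw [H0_eq, G2, zero_mul]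
  have hH0t : 0 < H0 (3/2) := by
    rw [H0_eq]; exact mul_pos G32 (hr (3/2))
  have hst : s ≠ 3/2 := by rintro rfl; linarith
  -- three distinct zeros of F1
  have key : ∃ p0 p1 p2 : ℝ, p0 ≠ p1 ∧ p0 ≠ p2 ∧ p1 ≠ p2 ∧
      F1 p0 = 0 ∧ F1 p1 = 0 ∧ F1 p2 = 0 := by
    rcases lt_or_gt_of_ne hst with hσ | hσ
    · -- s < 3/2
      obtain ⟨w, hw1, hw2, hw3⟩ := pos_right F1_at_1 hH01 hs1
      obtain ⟨p0, hp0a, hp0b, hp0z, hp0v⟩ :=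
        interior_max hs1 hw1 hw2 hH01.le hH0s hw3
      obtain ⟨p1, hp1a, hp1b, hp1z, hp1v⟩ :=
        interior_min (by norm_num : (1:ℝ) < 3/2) hs1 hσ hH01.ge hH0t.le hH0s
      obtain ⟨p2, hp2a, hp2b, hp2z, hp2v⟩ :=
        interior_max hs2 hσ (by norm_num : (3/2:ℝ) < 2) hH0s hH02.le hH0t
      exact ⟨p0, p1, p2, fun h => by rw [h] at hp0v; linarith,
        fun h => by rw [h] at hp0b; linarith,
        fun h => by rw [h] at hp1v; linarith, hp0z, hp1z, hp2z⟩
    · -- 3/2 < s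
      obtain ⟨p0, hp0a, hp0b, hp0z, hp0v⟩ :=
        interior_max hs1 (by norm_num : (1:ℝ) < 3/2) hσ hH01.le hH0s hH0t
      obtain ⟨p1, hp1a, hp1b, hp1z, hp1v⟩ :=
        interior_min (by norm_num : (3/2:ℝ) < 2) hσ hs2 hH0t.le hH02.ge hH0s
      obtain ⟨w, hw1, hw2, hw3⟩ := pos_left F1_at_2 hH02 hs2
      obtain ⟨p2, hp2a, hp2b, hp2z, hp2v⟩ :=
        interior_max hs2 hw1 hw2 hH0s hH02.le hw3
      exact ⟨p0, p1, p2, fun h => by rw [h] at hp0v; linarith,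
        fun h => by rw [h] at hp0b; linarith,
        fun h => by rw [h] at hp1v; linarith, hp0z, hp1z, hp2z⟩
  obtain ⟨p0, p1, p2, h01, h02, h12, z0, z1, z2⟩ := key
  obtain ⟨a, b, c, hab, hbc, za, zb, zc⟩ :=
    sort3 (P := fun x => F1 x = 0) h01 h02 h12 z0 z1 z2
  have Ha : H1 a = 0 := by rw [H1_eq, za, zero_mul]
  have Hb : H1 b = 0 := by rw [H1_eq, zb, zero_mul]
  have Hc : H1 c = 0 := by rw [H1_eq, zc, zero_mul]
  obtain ⟨q1, hq1, dq1⟩ := exists_deriv_eq_zero hab contH1.continuousOn (Ha.trans Hb.symm)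
  obtain ⟨q2, hq2, dq2⟩ := exists_deriv_eq_zero hbc contH1.continuousOn (Hb.trans Hc.symm)
  have Fq1 : F2 q1 = 0 := by rw [← (d2 q1).deriv]; exact dq1
  have Fq2 : F2 q2 = 0 := by rw [← (d2 q2).deriv]; exact dq2
  have hq12 : q1 < q2 := lt_trans hq1.2 hq2.1
  have K1 : H2 q1 = 0 := by rw [H2_eq, Fq1, zero_mul]
  have K2 : H2 q2 = 0 := by rw [H2_eq, Fq2, zero_mul]
  obtain ⟨r, _, dr⟩ := exists_deriv_eq_zero hq12 contH2.continuousOn (K1.trans K2.symm)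
  have hF3r : F3 r = 0 := by rw [← (d3 r).deriv]; exact dr
  exact absurd hF3r (ne_of_gt (F3_pos r))

end Stmt9Aux

theorem stmt_9 (H : ℝ) (hH : H ∈ Ioo (1 / 2 : ℝ) 1) :
    0 < rho H 2 * (1 + rho H 2) - rho H 1 * (rho H 1 + rho H 3) := by
  obtain ⟨hH1, hH2⟩ := hH
  have hs1 : 1 < 2 * H := by linarith
  have hs2 : 2 * H < 2 := by linarith
  have hsne : 2 * H ≠ 0 := by linarith
  have r1 : rho H 1 = ((2:ℝ) ^ (2 * H) - 2) / 2 := by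
    simp only [rho, if_neg (by norm_num : (1:ℕ) ≠ 0)]
    push_cast
    norm_num [Real.one_rpow, Real.zero_rpow hsne]
  have r2 : rho H 2 = ((3:ℝ) ^ (2 * H) - 2 * (2:ℝ) ^ (2 * H) + 1) / 2 := by
    simp only [rho, if_neg (by norm_num : (2:ℕ) ≠ 0)]
    push_cast
    norm_num [Real.one_rpow]
  have h4 : (4:ℝ) ^ (2 * H) = (2:ℝ) ^ (2 * H) * (2:ℝ) ^ (2 * H) := by
    rw [Stmt9Aux.mulr (2 * H) 2 2 (by norm_num) (by norm_num)]; norm_num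
  have r3 : rho H 3 = ((2:ℝ) ^ (2 * H) * (2:ℝ) ^ (2 * H) - 2 * (3:ℝ) ^ (2 * H)
      + (2:ℝ) ^ (2 * H)) / 2 := by
    simp only [rho, if_neg (by norm_num : (3:ℕ) ≠ 0)]
    push_cast
    rw [show (3:ℝ) + 1 = 4 by norm_num, show (3:ℝ) - 1 = 2 by norm_num, h4]
  have hG := Stmt9Aux.G_pos hs1 hs2
  have hGeq : Stmt9Aux.G (2 * H) = (3:ℝ) ^ (2 * H) * (3:ℝ) ^ (2 * H)
      - (2:ℝ) ^ (2 * H) * ((2:ℝ) ^ (2 * H) * (2:ℝ) ^ (2 * H))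
      - 2 * ((2:ℝ) ^ (2 * H) * (3:ℝ) ^ (2 * H))
      + 4 * ((2:ℝ) ^ (2 * H) * (2:ℝ) ^ (2 * H)) - 2 * (2:ℝ) ^ (2 * H) - 1 := by
    have e9 : (9:ℝ) ^ (2 * H) = (3:ℝ) ^ (2 * H) * (3:ℝ) ^ (2 * H) := by
      rw [Stmt9Aux.mulr (2 * H) 3 3 (by norm_num) (by norm_num)]; norm_num
    have e8 : (8:ℝ) ^ (2 * H) = (2:ℝ) ^ (2 * H) * ((2:ℝ) ^ (2 * H) * (2:ℝ) ^ (2 * H)) := by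
      rw [Stmt9Aux.mulr (2 * H) 2 2 (by norm_num) (by norm_num),
        Stmt9Aux.mulr (2 * H) 2 (2 * 2) (by norm_num) (by norm_num)]
      norm_num
    have e6 : (6:ℝ) ^ (2 * H) = (2:ℝ) ^ (2 * H) * (3:ℝ) ^ (2 * H) := by
      rw [Stmt9Aux.mulr (2 * H) 2 3 (by norm_num) (by norm_num)]; norm_num
    simp only [Stmt9Aux.G]
    rw [e9, e8, e6, h4]
  have keyeq : rho H 2 * (1 + rho H 2) - rho H 1 * (rho H 1 + rho H 3)
      = Stmt9Aux.G (2 * H) / 4 := by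
    rw [r1, r2, r3, hGeq]; ring
  rw [keyeq]
  linarith
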